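/- There is no strictly increasing sequence of n-term Egyptian fractions: for fixed n ≥ 1, there is no function f : ℕ → ℝ with f(k) < f(k+1) for all k such that each f(k) is a sum of exactly n unit fractions. -/

import Mathlib

lemma egyptian_aux : ∀ n : ℕ, ∀ f : ℕ → ℝ,
    (∀ k, ∃ m : Fin n → ℕ, (∀ i, 1 ≤ m i) ∧ f k = ∑ i, (1 : ℝ) / (m i)) →
    (∀ k, f k < f (k + 1)) → False := by
  intro n
  induction n with
  | zero =>
    intro f h hlt
    obtain ⟨m0, _, h0⟩ := h 0
    obtain ⟨m1, _, h1⟩ := h 1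
    simp at h0 h1
    linarith [hlt 0]
  | succ n ih =>
    intro f h hlt
    have hmono : StrictMono f := strictMono_nat_of_lt_succ hlt
    set m : ℕ → Fin (n + 1) → ℕ := fun k => (h k).choose with hm
    have hm1 : ∀ k i, 1 ≤ m k i := fun k => (h k).choose_spec.1
    have hm2 : ∀ k, f k = ∑ i, (1 : ℝ) / (m k i) := fun k => (h k).choose_spec.2
    have hpos : ∀ k i, (0 : ℝ) < 1 / (m k i) := by
      intro k i
      have : (1 : ℝ) ≤ (m k i : ℝ) := by exact_mod_cast hm1 k i
      positivity
    have hf0 : 0 < f 0 := by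
      rw [hm2 0]
      exact Finset.sum_pos (fun i _ => hpos 0 i) Finset.univ_nonempty
    -- choose minimal denominator index
    have hi : ∀ k, ∃ i : Fin (n + 1), ∀ j, m k i ≤ m k j := by
      intro k
      obtain ⟨i, _, hmin⟩ := Finset.exists_min_image Finset.univ (m k) ⟨0, Finset.mem_univ 0⟩
      exact ⟨i, fun j => hmin j (Finset.mem_univ j)⟩
    set idx : ℕ → Fin (n + 1) := fun k => (hi k).choose with hidx
    have hidxmin : ∀ k j, m k (idx k) ≤ m k j := fun k => (hi k).choose_spec
    -- bound the minimal denominator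
    have hbound : ∀ k, (m k (idx k) : ℝ) ≤ (n + 1) / f 0 := by
      intro k
      have hfk : f 0 ≤ f k := hmono.le_iff_le.mpr (Nat.zero_le k)
      have hle : f k ≤ (n + 1) * (1 / (m k (idx k))) := by
        rw [hm2 k]
        calc ∑ i, (1 : ℝ) / (m k i) ≤ ∑ _i : Fin (n+1), (1 : ℝ) / (m k (idx k)) := by
              apply Finset.sum_le_sum
              intro i _
              apply one_div_le_one_div_of_le
              · exact_mod_cast hm1 k (idx k)
              · exact_mod_cast hidxmin k i
          _ = (n + 1) * (1 / (m k (idx k))) := by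
              rw [Finset.sum_const, Finset.card_univ, Fintype.card_fin]
              push_cast; ring
      have hmp : (0 : ℝ) < m k (idx k) := by
        have : (1 : ℝ) ≤ (m k (idx k) : ℝ) := by exact_mod_cast hm1 k (idx k)
        linarith
      rw [le_div_iff₀ hf0]
      have := hf0.trans_le hfk
      calc (m k (idx k) : ℝ) * f 0 ≤ (m k (idx k) : ℝ) * f k := by
            apply mul_le_mul_of_nonneg_left hfk hmp.le
        _ ≤ (m k (idx k) : ℝ) * ((n + 1) * (1 / (m k (idx k)))) :=
            mul_le_mul_of_nonneg_left hle hmp.le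
        _ = (n + 1) := by field_simp
    set M : ℕ := ⌈(n + 1 : ℝ) / f 0⌉₊ with hM
    have hboundN : ∀ k, m k (idx k) < M + 1 := by
      intro k
      have : (m k (idx k) : ℝ) ≤ (M : ℝ) := (hbound k).trans (Nat.le_ceil _)
      have := Nat.cast_le.mp this
      omega
    -- pigeonhole
    set g : ℕ → Fin (M + 1) := fun k => ⟨m k (idx k), hboundN k⟩ with hg
    obtain ⟨b, hb⟩ := Finite.exists_infinite_fiber g
    have hbinf : (setOf fun k => g k = b).Infinite := by
      rw [Set.infinite_coe_iff] at hb
      simp [Set.preimage] at hb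
      exact hb
    set e : ℕ → ℕ := Nat.nth (fun k => g k = b) with he
    have hemono : StrictMono e := Nat.nth_strictMono hbinf
    have hemem : ∀ k, g (e k) = b := fun k => Nat.nth_mem_of_infinite hbinf k
    have hdenom : ∀ k, m (e k) (idx (e k)) = (b : ℕ) := by
      intro k
      have := hemem k
      simpa [hg, Fin.ext_iff] using this
    -- recurse
    set F : ℕ → ℝ := fun k => f (e k) - 1 / ((b : ℕ) : ℝ) with hF
    apply ih F
    · intro k
      refine ⟨fun j => m (e k) ((idx (e k)).succAbove j), fun j => hm1 _ _, ?_⟩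
      have hsum := Fin.sum_univ_succAbove (fun i => (1 : ℝ) / (m (e k) i)) (idx (e k))
      have : f (e k) = 1 / ((b : ℕ) : ℝ) + ∑ j : Fin n, (1:ℝ) / (m (e k) ((idx (e k)).succAbove j)) := by
        rw [hm2 (e k), hsum, hdenom k]
      simp only [hF]
      linarith
    · intro k
      have : e k < e (k + 1) := hemono (Nat.lt_succ_self k)
      have := hmono this
      simp only [hF]
      linarith

theorem stmt_14 (n : ℕ) (hn : 1 ≤ n) :
    ¬∃ f : ℕ → ℝ,
      (∀ k, ∃ m : Fin n → ℕ, (∀ i, 1 ≤ m i) ∧ f k = ∑ i, (1 : ℝ) / (m i)) ∧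
      ∀ k, f k < f (k + 1) := by
  rintro ⟨f, h1, h2⟩
  exact egyptian_aux n f h1 h2
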